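/- (Engstrom cancellation in equal outer degree.) Let k be a field of characteristic zero and let P, Q, R, S ∈ k[x] be nonconstant polynomials satisfying P.comp Q = R.comp S and natDegree P = natDegree R. Then there exist a ∈ k with a ≠ 0 and b ∈ k such that P = R.comp (C a * X + C b) and S = C a * Q + C b. -/

import Mathlib

open Polynomial Finset

private lemma arith_lt {n d i j : ℕ} (hd : d < n) (hj : j + 1 < i) :
    j * n + (i - j) * d < (i - 1) * n + d := by
  have h1 : i - j = (i - 1 - j) + 1 := by omega
  have h2 : i - 1 = j + (i - 1 - j) := by omega
  set t := i - 1 - j with ht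
  have ht1 : 0 < t := by omega
  have htd : t * d < t * n := mul_lt_mul_of_pos_left hd ht1
  have e1 : (i - j) * d = t * d + d := by rw [h1, add_mul, one_mul]
  have e2 : (i - 1) * n = j * n + t * n := by rw [h2, add_mul]
  omega

private lemma pow_sub_pow_aux {k : Type*} [Field k] (V U : k[X]) {n d : ℕ}
    (hVn : V.natDegree = n) (hUd : U.natDegree = d)
    (hV : V ≠ 0) (hU : U ≠ 0) (hdn : d < n) {i : ℕ} (hi : 1 ≤ i) :
    natDegree ((V + U) ^ i - V ^ i) ≤ (i - 1) * n + d ∧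
      ((V + U) ^ i - V ^ i).coeff ((i - 1) * n + d)
        = (i : k) * (V.leadingCoeff ^ (i - 1) * U.leadingCoeff) := by
  have key : (V + U) ^ i - V ^ i
      = ∑ j ∈ range i, V ^ j * U ^ (i - j) * C ((i.choose j : k)) := by
    have h0 := add_pow V U i
    rw [Finset.sum_range_succ] at h0
    simp only [Nat.sub_self, pow_zero, Nat.choose_self, Nat.cast_one, mul_one] at h0
    rw [h0]
    simp only [C_eq_natCast]
    ring
  have hterm_le : ∀ j, j < i → natDegree (V ^ j * U ^ (i - j) * C ((i.choose j : k)))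
      ≤ j * n + (i - j) * d := by
    intro j hj
    calc natDegree (V ^ j * U ^ (i - j) * C ((i.choose j : k)))
        ≤ natDegree (V ^ j * U ^ (i - j)) + natDegree (C ((i.choose j : k))) :=
          natDegree_mul_le
      _ ≤ natDegree (V ^ j) + natDegree (U ^ (i - j)) + 0 := by
          rw [natDegree_C]; exact add_le_add_left natDegree_mul_le 0
      _ ≤ j * n + (i - j) * d := by
          rw [add_zero]
          exact add_le_add (hVn ▸ natDegree_pow_le) (hUd ▸ natDegree_pow_le)
  constructor
  · rw [key]
    refine natDegree_sum_le_of_forall_le _ _ ?_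
    intro j hj
    rw [Finset.mem_range] at hj
    refine (hterm_le j hj).trans ?_
    have h2 : i - j = (i - 1 - j) + 1 := by omega
    have h3 : i - 1 = j + (i - 1 - j) := by omega
    have e1 : (i - j) * d = (i - 1 - j) * d + d := by rw [h2, add_mul, one_mul]
    have e2 : (i - 1) * n = j * n + (i - 1 - j) * n := by
      conv_lhs => rw [h3, add_mul]
    have e3 : (i - 1 - j) * d ≤ (i - 1 - j) * n := Nat.mul_le_mul_left _ hdn.le
    omega
  · rw [key, finset_sum_coeff]
    rw [Finset.sum_eq_single (i - 1)]
    · have hii : i - (i - 1) = 1 := by omega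
      have hch : i.choose (i - 1) = i := by rw [Nat.choose_symm hi, Nat.choose_one_right]
      rw [hii, hch, pow_one, coeff_mul_C]
      have hVp : (V ^ (i - 1)).natDegree = (i - 1) * n := by
        rw [natDegree_pow' (pow_ne_zero _ (leadingCoeff_ne_zero.mpr hV)), hVn]
      have hNd : (i - 1) * n + d = (V ^ (i - 1)).natDegree + U.natDegree := by
        rw [hVp, hUd]
      rw [hNd, coeff_mul_degree_add_degree,
        leadingCoeff_pow' (pow_ne_zero _ (leadingCoeff_ne_zero.mpr hV))]
      ring
    · intro j hj hne
      rw [Finset.mem_range] at hj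
      have hlt : j + 1 < i := by omega
      exact coeff_eq_zero_of_natDegree_lt (lt_of_le_of_lt (hterm_le j hj) (arith_lt hdn hlt))
    · intro hmem
      exact absurd (Finset.mem_range.mpr (by omega)) hmem

private lemma comp_sub_comp_aux {k : Type*} [Field k] [CharZero k] (R V U : k[X]) {m n d : ℕ}
    (hm : R.natDegree = m) (hm1 : 1 ≤ m)
    (hVn : V.natDegree = n) (hUd : U.natDegree = d) (hV : V ≠ 0) (hU : U ≠ 0) (hdn : d < n) :
    (R.comp (V + U) - R.comp V).coeff ((m - 1) * n + d) ≠ 0 ∧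
      natDegree (R.comp (V + U) - R.comp V) ≤ (m - 1) * n + d := by
  have hexp : ∀ p : k[X], R.comp p = ∑ i ∈ range (m + 1), C (R.coeff i) * p ^ i := by
    intro p
    rw [comp_eq_sum_left, ← hm]
    exact sum_over_range _ (by simp)
  have key : R.comp (V + U) - R.comp V
      = ∑ i ∈ range (m + 1), C (R.coeff i) * ((V + U) ^ i - V ^ i) := by
    rw [hexp, hexp, ← Finset.sum_sub_distrib]
    exact Finset.sum_congr rfl fun i _ => (mul_sub _ _ _).symm
  have hterm_le : ∀ i ∈ range (m + 1),
      natDegree (C (R.coeff i) * ((V + U) ^ i - V ^ i)) ≤ (m - 1) * n + d := by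
    intro i hi
    rw [Finset.mem_range] at hi
    rcases Nat.eq_zero_or_pos i with h0 | h1
    · subst h0
      simp only [pow_zero, sub_self, mul_zero, natDegree_zero]
      exact Nat.zero_le _
    · calc natDegree (C (R.coeff i) * ((V + U) ^ i - V ^ i))
          ≤ natDegree (C (R.coeff i)) + natDegree ((V + U) ^ i - V ^ i) := natDegree_mul_le
        _ ≤ 0 + ((i - 1) * n + d) := by
            rw [natDegree_C]
            exact add_le_add_right (pow_sub_pow_aux V U hVn hUd hV hU hdn h1).1 0
        _ ≤ (m - 1) * n + d := by
            rw [zero_add]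
            have : (i - 1) * n ≤ (m - 1) * n := Nat.mul_le_mul_right n (by omega)
            omega
  constructor
  · rw [key, finset_sum_coeff, Finset.sum_eq_single m]
    · rw [coeff_C_mul, (pow_sub_pow_aux V U hVn hUd hV hU hdn hm1).2]
      have h1 : R.coeff m ≠ 0 := by
        rw [← hm]; exact leadingCoeff_ne_zero.mpr (fun h0 => by simp [h0] at hm; omega)
      have h2 : (m : k) ≠ 0 := Nat.cast_ne_zero.mpr (by omega)
      have h3 : V.leadingCoeff ^ (m - 1) ≠ 0 := pow_ne_zero _ (leadingCoeff_ne_zero.mpr hV)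
      have h4 : U.leadingCoeff ≠ 0 := leadingCoeff_ne_zero.mpr hU
      exact mul_ne_zero h1 (mul_ne_zero h2 (mul_ne_zero h3 h4))
    · intro i hi hne
      rw [Finset.mem_range] at hi
      rcases Nat.eq_zero_or_pos i with h0 | h1
      · subst h0; simp
      · apply coeff_eq_zero_of_natDegree_lt
        calc natDegree (C (R.coeff i) * ((V + U) ^ i - V ^ i))
            ≤ natDegree (C (R.coeff i)) + natDegree ((V + U) ^ i - V ^ i) := natDegree_mul_le
          _ ≤ 0 + ((i - 1) * n + d) := by
              rw [natDegree_C]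
              exact add_le_add_right (pow_sub_pow_aux V U hVn hUd hV hU hdn h1).1 0
          _ < (m - 1) * n + d := by
              rw [zero_add]
              have hin : (i - 1) * n < (m - 1) * n :=
                Nat.mul_lt_mul_of_lt_of_le (by omega) (le_refl n) (by omega)
              omega
    · intro hmem
      exact absurd (Finset.mem_range.mpr (by omega)) hmem
  · rw [key]
    exact natDegree_sum_le_of_forall_le _ _ hterm_le

theorem stmt_2 (k : Type*) [Field k] [CharZero k] (P Q R S : k[X])
    (hP : 0 < P.natDegree) (hQ : 0 < Q.natDegree) (hR : 0 < R.natDegree)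
    (hS : 0 < S.natDegree) (h : P.comp Q = R.comp S) (hdeg : P.natDegree = R.natDegree) :
    ∃ a b : k, a ≠ 0 ∧ P = R.comp (C a * X + C b) ∧ S = C a * Q + C b := by
  have hQ0 : Q ≠ 0 := fun h0 => by simp [h0] at hQ
  have hS0 : S ≠ 0 := fun h0 => by simp [h0] at hS
  have hn : S.natDegree = Q.natDegree := by
    have hh := congrArg natDegree h
    rw [natDegree_comp, natDegree_comp, hdeg] at hh
    exact (Nat.eq_of_mul_eq_mul_left hR hh).symm
  set a := S.leadingCoeff / Q.leadingCoeff with ha_def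
  have ha : a ≠ 0 :=
    div_ne_zero (leadingCoeff_ne_zero.mpr hS0) (leadingCoeff_ne_zero.mpr hQ0)
  set V := C a * Q with hV_def
  have hV0 : V ≠ 0 := mul_ne_zero (by simpa using ha) hQ0
  have hVdeg : V.natDegree = Q.natDegree := natDegree_C_mul ha
  have hlcV : V.leadingCoeff = S.leadingCoeff := by
    rw [hV_def, leadingCoeff_mul, leadingCoeff_C, ha_def,
      div_mul_cancel₀ _ (leadingCoeff_ne_zero.mpr hQ0)]
  set U := S - V with hU_def
  have hS_eq : S = V + U := by rw [hU_def]; ring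
  have hUdeg : U.natDegree < Q.natDegree := by
    rcases eq_or_ne U 0 with h0 | h0
    · rw [h0, natDegree_zero]; exact hQ
    · have hdSV : S.degree = V.degree := by
        rw [degree_eq_natDegree hS0, degree_eq_natDegree hV0, hVdeg, hn]
      have hlt := degree_sub_lt hdSV hS0 hlcV.symm
      rw [← hn]
      exact natDegree_lt_natDegree h0 hlt
  have hU0deg : U.natDegree = 0 := by
    by_contra hd0
    have hU0 : U ≠ 0 := fun h0 => by rw [h0, natDegree_zero] at hd0; exact hd0 rfl
    set G : k[X] := P - R.comp (C a * X) with hG_def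
    have hcomp : R.comp (V + U) - R.comp V = G.comp Q := by
      rw [← hS_eq, ← h, hG_def, sub_comp, comp_assoc]
      congr 2
      simp [hV_def]
    obtain ⟨hc, hle⟩ := comp_sub_comp_aux R V U rfl hR hVdeg rfl hV0 hU0 hUdeg
    rw [hcomp] at hc hle
    have hGQ0 : G.comp Q ≠ 0 := fun h0 => by rw [h0] at hc; simp at hc
    have hdeg_eq : G.natDegree * Q.natDegree
        = (R.natDegree - 1) * Q.natDegree + U.natDegree := by
      rw [← natDegree_comp]
      exact le_antisymm hle (le_natDegree_of_ne_zero hc)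
    have hdvd : Q.natDegree ∣ U.natDegree := by
      have h1 : Q.natDegree ∣ G.natDegree * Q.natDegree := dvd_mul_left _ _
      have h2 : Q.natDegree ∣ (R.natDegree - 1) * Q.natDegree := dvd_mul_left _ _
      rw [hdeg_eq] at h1
      exact (Nat.dvd_add_right h2).mp h1
    have := Nat.le_of_dvd (Nat.pos_of_ne_zero hd0) hdvd
    omega
  obtain ⟨b, hb⟩ : ∃ b, C b = U := by
    exact ⟨U.coeff 0, (eq_C_of_natDegree_eq_zero hU0deg).symm⟩
  have hSab : S = C a * Q + C b := by rw [hS_eq, hb, hV_def]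
  refine ⟨a, b, ha, ?_, hSab⟩
  have h2 : (P - R.comp (C a * X + C b)).comp Q = 0 := by
    rw [sub_comp, comp_assoc, h]
    have : (C a * X + C b).comp Q = S := by
      rw [hSab]; simp
    rw [this, sub_self]
  rcases comp_eq_zero_iff.mp h2 with h3 | h3
  · exact sub_eq_zero.mp h3
  · exfalso
    have := h3.2
    have : Q.natDegree = 0 := by rw [this, natDegree_C]
    omega
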